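/- arXiv:2108.09097 — 2 statements merged into one kernel-verified Lean document; each statement's English description precedes it below -/
import Mathlib

section
/- Let H be a bialgebra over a commutative ring R and let τ : H → H be an R-linear involution that is an algebra antimorphism and is either a coalgebra morphism or a coalgebra antimorphism. Let p_1, …, p_k ∈ H be primitive elements with τ(p_i) = p_i for all i. Then for every integer a ≥ 1, the symmetrised product v := Σ_{σ ∈ S_k} p_{σ(1)}⋯p_{σ(k)} satisfies Ψ_a^+(v) = (a·1_R)^k · v and Ψ_a^−(v) = (a·1_R)^k · v. -/
open TensorProduct

/-- Convolution product `f * g := m ∘ (f ⊗ g) ∘ Δ` of linear endomorphisms of a bialgebra. -/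
noncomputable def convProd {R H : Type*} [CommRing R] [Ring H] [Bialgebra R H]
    (f g : H →ₗ[R] H) : H →ₗ[R] H :=
  LinearMap.mul' R H ∘ₗ TensorProduct.map f g ∘ₗ Coalgebra.comul

/-- `PsiAux τ n = (Ψ_{n+1}^+, Ψ_{n+1}^−)`: the hyperoctahedral riffle-shuffle operators,
defined by `Ψ_1^+ = id`, `Ψ_1^− = τ`, `Ψ_{a+1}^+ = id * Ψ_a^−`, `Ψ_{a+1}^− = τ * Ψ_a^+`. -/
noncomputable def PsiAux {R H : Type*} [CommRing R] [Ring H] [Bialgebra R H]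
    (τ : H →ₗ[R] H) : ℕ → (H →ₗ[R] H) × (H →ₗ[R] H)
  | 0 => (LinearMap.id, τ)
  | n + 1 => (convProd LinearMap.id (PsiAux τ n).2, convProd τ (PsiAux τ n).1)

/-- The operator `Ψ_a^+` (for `a ≥ 1`). -/
noncomputable def PsiPlus {R H : Type*} [CommRing R] [Ring H] [Bialgebra R H]
    (τ : H →ₗ[R] H) (a : ℕ) : H →ₗ[R] H := (PsiAux τ (a - 1)).1

/-- The operator `Ψ_a^−` (for `a ≥ 1`). -/
noncomputable def PsiMinus {R H : Type*} [CommRing R] [Ring H] [Bialgebra R H]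
    (τ : H →ₗ[R] H) (a : ℕ) : H →ₗ[R] H := (PsiAux τ (a - 1)).2

/-- `p` is a primitive element: `Δ p = 1 ⊗ p + p ⊗ 1`. -/
def IsPrimitive (R : Type*) {H : Type*} [CommRing R] [Ring H] [Bialgebra R H] (p : H) : Prop :=
  Coalgebra.comul (R := R) p = 1 ⊗ₜ[R] p + p ⊗ₜ[R] 1

/-- `τ` is a coalgebra morphism: `Δ ∘ τ = (τ ⊗ τ) ∘ Δ` and `ε ∘ τ = ε`. -/
def IsCoalgMorph {R H : Type*} [CommRing R] [Ring H] [Bialgebra R H] (τ : H →ₗ[R] H) : Prop :=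
  Coalgebra.comul ∘ₗ τ = TensorProduct.map τ τ ∘ₗ (Coalgebra.comul : H →ₗ[R] H ⊗[R] H) ∧
    Coalgebra.counit ∘ₗ τ = (Coalgebra.counit : H →ₗ[R] R)

/-- `τ` is a coalgebra antimorphism: `Δ ∘ τ = swap ∘ (τ ⊗ τ) ∘ Δ` and `ε ∘ τ = ε`. -/
def IsCoalgAntimorph {R H : Type*} [CommRing R] [Ring H] [Bialgebra R H] (τ : H →ₗ[R] H) : Prop :=
  Coalgebra.comul ∘ₗ τ =
      (TensorProduct.comm R H H).toLinearMap ∘ₗ TensorProduct.map τ τ ∘ₗ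
        (Coalgebra.comul : H →ₗ[R] H ⊗[R] H) ∧
    Coalgebra.counit ∘ₗ τ = (Coalgebra.counit : H →ₗ[R] R)

section Combinatorics

variable {α β : Type*}

/-- All binary splits of a list into a subsequence and its complement. -/
def ListSplits : List α → List (List α × List α)
  | [] => [([], [])]
  | x :: l => (ListSplits l).flatMap fun s => [(x :: s.1, s.2), (s.1, x :: s.2)]

lemma listSplits_map (f : α → β) :
    ∀ l : List α, ListSplits (l.map f) = (ListSplits l).map fun s => (s.1.map f, s.2.map f)
  | [] => rfl
  | x :: l => by
    simp [ListSplits, listSplits_map f l, List.flatMap_map, List.map_flatMap]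

lemma perm_of_mem_listSplits : ∀ {l : List α} {s : List α × List α},
    s ∈ ListSplits l → List.Perm (s.1 ++ s.2) l
  | [], s, hs => by simp [ListSplits] at hs; simp [hs]
  | x :: l, s, hs => by
    simp only [ListSplits, List.mem_flatMap, List.mem_cons, List.mem_singleton] at hs
    obtain ⟨t, ht, rfl | rfl | h⟩ := hs
    · simpa using (perm_of_mem_listSplits ht).cons x
    · exact List.perm_middle.trans ((perm_of_mem_listSplits ht).cons x)
    · simp at h

lemma sum_pow_listSplits (c : ℕ) :
    ∀ l : List α, ((ListSplits l).map fun s => c ^ s.2.length).sum = (c + 1) ^ l.length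
  | [] => by simp [ListSplits]
  | x :: l => by
    rw [ListSplits, List.map_flatMap, List.flatMap, List.sum_flatten, List.map_map]
    have h1 : ∀ s : List α × List α,
        ((((([(x :: s.1, s.2), (s.1, x :: s.2)] : List (List α × List α))).map
          fun t => c ^ t.2.length)).sum) = (c + 1) * c ^ s.2.length := by
      intro s
      simp [List.length_cons, pow_succ]
      ring
    calc ((ListSplits l).map ((fun L => List.sum L) ∘ fun s =>
            (([(x :: s.1, s.2), (s.1, x :: s.2)] : List (List α × List α)).map
              fun t => c ^ t.2.length))).sum
        = ((ListSplits l).map fun s => (c + 1) * c ^ s.2.length).sum := by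
          exact congrArg List.sum (List.map_congr_left fun s _ => h1 s)
      _ = (c + 1) * ((ListSplits l).map fun s => c ^ s.2.length).sum := by
          rw [← List.sum_map_mul_left]
      _ = (c + 1) ^ (x :: l).length := by
          rw [sum_pow_listSplits c l, List.length_cons, pow_succ, mul_comm]

/-- Iterated rearrangements of a word under `Ψ_{a+1}^{±}` (with multiplicity);
`b = true` for `Ψ^+` (starting with `id`), `b = false` for `Ψ^-` (starting with `τ`). -/
def PsiArr : ℕ → Bool → List α → List (List α)
  | 0, b, l => [bif b then l else l.reverse]
  | a + 1, b, l =>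
      (ListSplits l).flatMap fun s =>
        (PsiArr a (!b) s.2).map fun m => (bif b then s.1 else s.1.reverse) ++ m

lemma psiArr_map (f : α → β) :
    ∀ (a : ℕ) (b : Bool) (l : List α),
      PsiArr a b (l.map f) = (PsiArr a b l).map (List.map f)
  | 0, b, l => by cases b <;> simp [PsiArr]
  | a + 1, b, l => by
    rw [PsiArr, PsiArr, listSplits_map, List.flatMap_map, List.map_flatMap]
    refine congrArg (fun g => List.flatMap g (ListSplits l)) (funext fun s => ?_)
    show ((PsiArr a (!b) (s.2.map f)).map fun m =>
        (bif b then s.1.map f else (s.1.map f).reverse) ++ m) = _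
    rw [psiArr_map f a (!b) s.2, List.map_map, List.map_map]
    refine List.map_congr_left fun m _ => ?_
    cases b <;> simp

lemma perm_of_mem_psiArr :
    ∀ {a : ℕ} {b : Bool} {l m : List α}, m ∈ PsiArr a b l → List.Perm m l
  | 0, b, l, m, hm => by
    cases b <;> simp [PsiArr] at hm <;> simp [hm]
  | a + 1, b, l, m, hm => by
    rw [PsiArr] at hm
    simp only [List.mem_flatMap, List.mem_map] at hm
    obtain ⟨s, hs, m', hm', rfl⟩ := hm
    have h1 : List.Perm (bif b then s.1 else s.1.reverse) s.1 := by
      cases b <;> simp [List.reverse_perm]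
    exact ((h1.append (perm_of_mem_psiArr hm')).trans (perm_of_mem_listSplits hs))

lemma length_psiArr :
    ∀ (a : ℕ) (b : Bool) (l : List α), (PsiArr a b l).length = (a + 1) ^ l.length
  | 0, b, l => by cases b <;> simp [PsiArr]
  | a + 1, b, l => by
    rw [PsiArr, List.length_flatMap]
    have h2 : ∀ s : List α × List α,
        ((List.length ∘ fun s : List α × List α =>
          (PsiArr a (!b) s.2).map fun m => (bif b then s.1 else s.1.reverse) ++ m) s)
          = (a + 1) ^ s.2.length := by
      intro s
      simp only [Function.comp_apply, List.length_map]
      exact length_psiArr a (!b) s.2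
    exact (congrArg List.sum (List.map_congr_left fun s _ => h2 s)).trans
      (sum_pow_listSplits (a + 1) l)

end Combinatorics

section Alg

variable {R H : Type*} [CommRing R] [Ring H] [Bialgebra R H]

lemma tau_list_prod (τ : H →ₗ[R] H) (halg1 : τ 1 = 1)
    (halgmul : ∀ x y : H, τ (x * y) = τ y * τ x) :
    ∀ l : List H, (∀ x ∈ l, τ x = x) → τ l.prod = l.reverse.prod
  | [], _ => by simpa using halg1
  | x :: l, h => by
    rw [List.prod_cons, halgmul, tau_list_prod τ halg1 halgmul l
      (fun y hy => h y (List.mem_cons_of_mem x hy)), h x List.mem_cons_self]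
    simp

lemma comul_list_prod :
    ∀ l : List H, (∀ x ∈ l, IsPrimitive R x) →
      Coalgebra.comul (R := R) l.prod
        = ((ListSplits l).map fun s => s.1.prod ⊗ₜ[R] s.2.prod).sum
  | [], _ => by simp [ListSplits, Algebra.TensorProduct.one_def]
  | x :: l, h => by
    rw [List.prod_cons, Bialgebra.comul_mul,
      comul_list_prod l (fun y hy => h y (List.mem_cons_of_mem x hy)),
      h x List.mem_cons_self]
    rw [ListSplits, List.map_flatMap, List.flatMap, List.sum_flatten, List.map_map]
    have key : ∀ s : List H × List H,
        (1 ⊗ₜ[R] x + x ⊗ₜ[R] 1) * (s.1.prod ⊗ₜ[R] s.2.prod)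
          = ((([(x :: s.1, s.2), (s.1, x :: s.2)] : List (List H × List H)).map
              fun t => t.1.prod ⊗ₜ[R] t.2.prod).sum) := by
      intro s
      simp [add_mul, Algebra.TensorProduct.tmul_mul_tmul, add_comm]
    rw [← List.sum_map_mul_left]
    exact congrArg List.sum (List.map_congr_left fun s _ => (key s))

lemma convProd_list_prod (f g : H →ₗ[R] H) (l : List H) (h : ∀ x ∈ l, IsPrimitive R x) :
    convProd f g l.prod = ((ListSplits l).map fun s => f s.1.prod * g s.2.prod).sum := by
  have h0 : convProd f g l.prod
      = LinearMap.mul' R H (TensorProduct.map f g (Coalgebra.comul l.prod)) := rfl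
  rw [h0, comul_list_prod l h, map_list_sum, map_list_sum, List.map_map, List.map_map]
  refine congrArg List.sum (List.map_congr_left fun s _ => ?_)
  simp [LinearMap.mul'_apply]

lemma tau_word (τ : H →ₗ[R] H) (halg1 : τ 1 = 1)
    (halgmul : ∀ x y : H, τ (x * y) = τ y * τ x)
    {k : ℕ} (p : Fin k → H) (hfix : ∀ i, τ (p i) = p i)
    (l : List (Fin k)) : τ (l.map p).prod = (l.reverse.map p).prod := by
  rw [tau_list_prod τ halg1 halgmul (l.map p), List.map_reverse]
  intro x hx
  obtain ⟨i, _, rfl⟩ := List.mem_map.mp hx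
  exact hfix i

lemma psiAux_word (τ : H →ₗ[R] H) (halg1 : τ 1 = 1)
    (halgmul : ∀ x y : H, τ (x * y) = τ y * τ x)
    {k : ℕ} (p : Fin k → H)
    (hprim : ∀ i, IsPrimitive R (p i)) (hfix : ∀ i, τ (p i) = p i) :
    ∀ (n : ℕ) (l : List (Fin k)),
      ((PsiAux τ n).1 (l.map p).prod
          = ((PsiArr n true l).map fun m => (m.map p).prod).sum) ∧
      ((PsiAux τ n).2 (l.map p).prod
          = ((PsiArr n false l).map fun m => (m.map p).prod).sum)
  | 0, l => by
    constructor
    · simp [PsiAux, PsiArr]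
    · simp only [PsiAux, PsiArr, cond_false, List.map_cons, List.map_nil, List.sum_cons,
        List.sum_nil, add_zero]
      exact tau_word τ halg1 halgmul p hfix l
  | n + 1, l => by
    have hp : ∀ x ∈ l.map p, IsPrimitive R x := by
      intro x hx
      obtain ⟨i, _, rfl⟩ := List.mem_map.mp hx
      exact hprim i
    have hsub : ∀ s : List (Fin k) × List (Fin k), s ∈ ListSplits l →
        (PsiAux τ n).2 ((s.2.map p).prod)
          = ((PsiArr n false s.2).map fun m => (m.map p).prod).sum :=
      fun s _ => (psiAux_word τ halg1 halgmul p hprim hfix n s.2).2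
    have hsub' : ∀ s : List (Fin k) × List (Fin k), s ∈ ListSplits l →
        (PsiAux τ n).1 ((s.2.map p).prod)
          = ((PsiArr n true s.2).map fun m => (m.map p).prod).sum :=
      fun s _ => (psiAux_word τ halg1 halgmul p hprim hfix n s.2).1
    constructor
    · show convProd LinearMap.id (PsiAux τ n).2 (l.map p).prod = _
      rw [convProd_list_prod _ _ _ hp, listSplits_map, List.map_map]
      rw [PsiArr, List.map_flatMap, List.flatMap, List.sum_flatten, List.map_map]
      refine congrArg List.sum (List.map_congr_left fun s hs => ?_)
      show LinearMap.id ((s.1.map p).prod) * (PsiAux τ n).2 ((s.2.map p).prod) = _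
      rw [LinearMap.id_apply, hsub s hs, ← List.sum_map_mul_left]
      simp only [Function.comp_apply, cond_true, Bool.not_true, List.map_map]
      refine congrArg List.sum (List.map_congr_left fun m _ => ?_)
      simp [List.prod_append]
    · show convProd τ (PsiAux τ n).1 (l.map p).prod = _
      rw [convProd_list_prod _ _ _ hp, listSplits_map, List.map_map]
      rw [PsiArr, List.map_flatMap, List.flatMap, List.sum_flatten, List.map_map]
      refine congrArg List.sum (List.map_congr_left fun s hs => ?_)
      show τ ((s.1.map p).prod) * (PsiAux τ n).1 ((s.2.map p).prod) = _
      rw [hsub' s hs, tau_word τ halg1 halgmul p hfix s.1,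
        ← List.sum_map_mul_left]
      simp only [Function.comp_apply, cond_false, Bool.not_false, List.map_map]
      refine congrArg List.sum (List.map_congr_left fun m _ => ?_)
      simp [List.prod_append]

/-- Resummation over all permutations of a list of patterns, each a permutation of
`finRange k`. -/
lemma sum_perm_patterns {k : ℕ} (W : List (Fin k) → H) (P : List (List (Fin k)))
    (hP : ∀ ρ ∈ P, List.Perm ρ (List.finRange k)) :
    (∑ σ : Equiv.Perm (Fin k), (P.map fun ρ => W (ρ.map ⇑σ)).sum)
      = P.length • ∑ σ : Equiv.Perm (Fin k), W (List.ofFn ⇑σ) := by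
  induction P with
  | nil => simp
  | cons ρ P ih =>
    have hρ : List.Perm ρ (List.finRange k) := hP ρ List.mem_cons_self
    have hlen : ρ.length = k := by
      simpa using hρ.length_eq
    have hnd : ρ.Nodup := hρ.nodup_iff.mpr (List.nodup_finRange k)
    set f : Fin k → Fin k := fun n => ρ.get (Fin.cast hlen.symm n) with hf
    have hinj : Function.Injective f := by
      intro i j hij
      have := List.nodup_iff_injective_get.mp hnd hij
      simpa [Fin.ext_iff] using this
    have hbij : Function.Bijective f := (Finite.injective_iff_bijective).mp hinj
    let e : Equiv.Perm (Fin k) := Equiv.ofBijective f hbij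
    have key : ∀ σ : Equiv.Perm (Fin k), ρ.map ⇑σ = List.ofFn ⇑(σ * e) := by
      intro σ
      apply List.ext_get
      · simp [hlen]
      · intro n h1 h2
        simp only [List.get_eq_getElem, List.getElem_map, List.get_ofFn, List.getElem_ofFn]
        show σ (ρ.get _) = (σ * e) _
        rw [Equiv.Perm.mul_apply]
        congr 1
    have hhead : (∑ σ : Equiv.Perm (Fin k), W (ρ.map ⇑σ))
        = ∑ σ : Equiv.Perm (Fin k), W (List.ofFn ⇑σ) := by
      rw [Finset.sum_congr rfl fun σ _ => congrArg W (key σ)]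
      exact Fintype.sum_bijective (fun σ => σ * e)
        (Group.mulRight_bijective e) _ _ (fun σ => rfl)
    simp only [List.map_cons, List.sum_cons]
    rw [Finset.sum_add_distrib, hhead, ih fun ρ' h => hP ρ' (List.mem_cons_of_mem ρ h),
      List.length_cons, succ_nsmul]
    exact add_comm _ _



lemma main_helper {k : ℕ} (p : Fin k → H) (n : ℕ) (b : Bool) :
    (∑ σ : Equiv.Perm (Fin k),
        ((PsiArr n b (List.ofFn ⇑σ)).map fun m => (m.map p).prod).sum)
      = (n + 1) ^ k • ∑ σ : Equiv.Perm (Fin k), ((List.ofFn ⇑σ).map p).prod := by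
  have h1 : ∀ σ : Equiv.Perm (Fin k), List.ofFn ⇑σ = (List.finRange k).map ⇑σ := by
    intro σ
    rw [← List.ofFn_id, List.map_ofFn, Function.comp_id]
  have h2 : (∑ σ : Equiv.Perm (Fin k),
        ((PsiArr n b (List.ofFn ⇑σ)).map fun m => (m.map p).prod).sum)
      = ∑ σ : Equiv.Perm (Fin k),
        ((PsiArr n b (List.finRange k)).map
          fun ρ => ((fun m => (m.map p).prod) (ρ.map ⇑σ))).sum :=
    Finset.sum_congr rfl fun σ _ => by rw [h1 σ, psiArr_map, List.map_map]; rfl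
  rw [h2, sum_perm_patterns (fun m => (m.map p).prod) (PsiArr n b (List.finRange k))
    (fun ρ h => perm_of_mem_psiArr h), length_psiArr, List.length_finRange]

end Alg
/-- if `τ` is a linear involution on a bialgebra `H` that is an algebra
antimorphism and a coalgebra (anti)morphism, and `p_1, …, p_k` are `τ`-invariant primitives,
then the symmetrised product `v = Σ_{σ ∈ S_k} p_{σ(1)}⋯p_{σ(k)}` satisfies
`Ψ_a^+(v) = (a·1_R)^k • v` and `Ψ_a^−(v) = (a·1_R)^k • v` for every `a ≥ 1`. -/
theorem symmetrised_product_eigenvector_of_algebra_antimorphism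
    {R H : Type*} [CommRing R] [Ring H] [Bialgebra R H]
    (τ : H →ₗ[R] H)
    (hinv : ∀ x, τ (τ x) = x)
    (halg1 : τ 1 = 1) (halgmul : ∀ x y : H, τ (x * y) = τ y * τ x)
    (hco : IsCoalgMorph τ ∨ IsCoalgAntimorph τ)
    (k : ℕ) (p : Fin k → H)
    (hprim : ∀ i, IsPrimitive R (p i))
    (hfix : ∀ i, τ (p i) = p i)
    (a : ℕ) (ha : 1 ≤ a) :
    PsiPlus τ a (∑ σ : Equiv.Perm (Fin k), (List.ofFn fun i => p (σ i)).prod) =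
        ((a : R)) ^ k • (∑ σ : Equiv.Perm (Fin k), (List.ofFn fun i => p (σ i)).prod) ∧
    PsiMinus τ a (∑ σ : Equiv.Perm (Fin k), (List.ofFn fun i => p (σ i)).prod) =
        ((a : R)) ^ k • (∑ σ : Equiv.Perm (Fin k), (List.ofFn fun i => p (σ i)).prod) := by
  obtain ⟨n, rfl⟩ : ∃ n, a = n + 1 := ⟨a - 1, by omega⟩
  have hword : ∀ σ : Equiv.Perm (Fin k),
      (List.ofFn fun i => p (σ i)) = (List.ofFn ⇑σ).map p := by
    intro σ
    rw [List.map_ofFn]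
    rfl
  have hcast : ((((n : R) + 1)) ^ k) • (∑ σ : Equiv.Perm (Fin k), ((List.ofFn ⇑σ).map p).prod)
      = ((n + 1) ^ k : ℕ) • (∑ σ : Equiv.Perm (Fin k), ((List.ofFn ⇑σ).map p).prod) := by
    rw [← Nat.cast_smul_eq_nsmul R]
    push_cast
    ring_nf
  simp only [hword]
  constructor
  · show (PsiAux τ (n + 1 - 1)).1 _ = _
    simp only [Nat.add_sub_cancel]
    rw [map_sum, Finset.sum_congr rfl fun (σ : Equiv.Perm (Fin k)) _ =>
      (psiAux_word τ halg1 halgmul p hprim hfix n (List.ofFn ⇑σ)).1,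
      main_helper p n true]
    push_cast
    rw [hcast]
  · show (PsiAux τ (n + 1 - 1)).2 _ = _
    simp only [Nat.add_sub_cancel]
    rw [map_sum, Finset.sum_congr rfl fun (σ : Equiv.Perm (Fin k)) _ =>
      (psiAux_word τ halg1 halgmul p hprim hfix n (List.ofFn ⇑σ)).2,
      main_helper p n false]
    push_cast
    rw [hcast]
end

section
/- Let H be a bialgebra over a commutative ring R and let τ : H → H be an R-linear involution that is an algebra antimorphism and is either a coalgebra morphism or a coalgebra antimorphism. Let p_1, …, p_k ∈ H be primitive with τ(p_i) = p_i, and let p̄_1, …, p̄_k̄ ∈ H be primitive with τ(p̄_j) = −p̄_j, where k̄ ≥ 1. Write P := Σ_{σ ∈ S_k} p_{σ(1)}⋯p_{σ(k)}. Then for every even integer a ≥ 2: Ψ_a^+(P · p̄_1⋯p̄_k̄) = 0 and Ψ_a^−(p̄_1⋯p̄_k̄ · P) = 0. -/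
open TensorProduct

section Helpers

variable {R H : Type*} [CommRing R] [Ring H] [Bialgebra R H]

lemma convProd_apply (f g : H →ₗ[R] H) (z : H) :
    convProd f g z = LinearMap.mul' R H (TensorProduct.map f g (Coalgebra.comul z)) := rfl

lemma comul_mul_primitive (q z : H) (hq : IsPrimitive R q) :
    Coalgebra.comul (R := R) (z * q) =
      Coalgebra.comul (R := R) z * (1 ⊗ₜ[R] q + q ⊗ₜ[R] 1) := by
  rw [Bialgebra.comul_mul, hq]

lemma comul_primitive_mul (q z : H) (hq : IsPrimitive R q) :
    Coalgebra.comul (R := R) (q * z) =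
      (1 ⊗ₜ[R] q + q ⊗ₜ[R] 1) * Coalgebra.comul (R := R) z := by
  rw [Bialgebra.comul_mul, hq]

/-- `L1`: if `f` kills `· * q`, then `τ * f` satisfies `(τ*f)(z*q) = -(q * (τ*f) z)`. -/
lemma step_odd_minus (τ : H →ₗ[R] H) (halgmul : ∀ x y : H, τ (x * y) = τ y * τ x)
    (q : H) (hq : IsPrimitive R q) (hqneg : τ q = -q)
    (f : H →ₗ[R] H) (hf : ∀ z, f (z * q) = 0) (z : H) :
    convProd τ f (z * q) = -(q * convProd τ f z) := by
  rw [convProd_apply, convProd_apply, comul_mul_primitive q z hq]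
  generalize Coalgebra.comul (R := R) z = t
  induction t using TensorProduct.induction_on with
  | zero => simp
  | tmul x y =>
      simp [hf, halgmul, hqneg, mul_add, add_mul, Algebra.TensorProduct.tmul_mul_tmul, one_mul, mul_one, map_add, TensorProduct.map_tmul, LinearMap.mul'_apply, LinearMap.id_coe, id_eq, mul_zero, zero_mul, zero_add, add_zero, neg_mul, mul_neg, mul_assoc]
  | add s t hs ht =>
      simp only [add_mul, map_add]
      rw [hs, ht]
      simp only [mul_add, neg_add]

/-- `L2`: if `f` kills `q * ·`, then `id * f` satisfies `(id*f)(q*z) = q * (id*f) z`. -/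
lemma step_odd_plus (q : H) (hq : IsPrimitive R q)
    (f : H →ₗ[R] H) (hf : ∀ z, f (q * z) = 0) (z : H) :
    convProd LinearMap.id f (q * z) = q * convProd LinearMap.id f z := by
  rw [convProd_apply, convProd_apply, comul_primitive_mul q z hq]
  generalize Coalgebra.comul (R := R) z = t
  induction t using TensorProduct.induction_on with
  | zero => simp
  | tmul x y =>
      simp [hf, mul_add, add_mul, Algebra.TensorProduct.tmul_mul_tmul, one_mul, mul_one, map_add, TensorProduct.map_tmul, LinearMap.mul'_apply, LinearMap.id_coe, id_eq, mul_zero, zero_mul, zero_add, add_zero, neg_mul, mul_neg, mul_assoc]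
  | add s t hs ht =>
      simp only [mul_add, map_add]
      rw [hs, ht]

/-- `L3`: if `f (z*q) = -(q * f z)`, then `id * f` kills `· * q`. -/
lemma step_even_plus (q : H) (hq : IsPrimitive R q)
    (f : H →ₗ[R] H) (hf : ∀ z, f (z * q) = -(q * f z)) (z : H) :
    convProd LinearMap.id f (z * q) = 0 := by
  rw [convProd_apply, comul_mul_primitive q z hq]
  generalize Coalgebra.comul (R := R) z = t
  induction t using TensorProduct.induction_on with
  | zero => simp
  | tmul x y =>
      simp [hf, mul_add, add_mul, Algebra.TensorProduct.tmul_mul_tmul, one_mul, mul_one, map_add, TensorProduct.map_tmul, LinearMap.mul'_apply, LinearMap.id_coe, id_eq, mul_zero, zero_mul, zero_add, add_zero, neg_mul, mul_neg, mul_assoc]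
  | add s t hs ht =>
      simp only [add_mul, map_add]
      rw [hs, ht, add_zero]

/-- `L4`: if `f (q*z) = q * f z`, then `τ * f` kills `q * ·`. -/
lemma step_even_minus (τ : H →ₗ[R] H) (halgmul : ∀ x y : H, τ (x * y) = τ y * τ x)
    (q : H) (hq : IsPrimitive R q) (hqneg : τ q = -q)
    (f : H →ₗ[R] H) (hf : ∀ z, f (q * z) = q * f z) (z : H) :
    convProd τ f (q * z) = 0 := by
  rw [convProd_apply, comul_primitive_mul q z hq]
  generalize Coalgebra.comul (R := R) z = t
  induction t using TensorProduct.induction_on with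
  | zero => simp
  | tmul x y =>
      simp [hf, halgmul, hqneg, mul_add, add_mul, Algebra.TensorProduct.tmul_mul_tmul, one_mul, mul_one, map_add, TensorProduct.map_tmul, LinearMap.mul'_apply, LinearMap.id_coe, id_eq, mul_zero, zero_mul, zero_add, add_zero, neg_mul, mul_neg, mul_assoc]
  | add s t hs ht =>
      simp only [mul_add, map_add]
      rw [hs, ht, add_zero]

lemma psi_odd (τ : H →ₗ[R] H) (halgmul : ∀ x y : H, τ (x * y) = τ y * τ x)
    (q : H) (hq : IsPrimitive R q) (hqneg : τ q = -q) (m : ℕ) :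
    (∀ z, (PsiAux τ (2 * m)).2 (z * q) = -(q * (PsiAux τ (2 * m)).2 z)) ∧
      (∀ z, (PsiAux τ (2 * m)).1 (q * z) = q * (PsiAux τ (2 * m)).1 z) := by
  induction m with
  | zero =>
      constructor
      · intro z
        show τ (z * q) = -(q * τ z)
        rw [halgmul, hqneg, neg_mul]
      · intro z
        rfl
  | succ n ih =>
      have h2n1 : 2 * (n + 1) = (2 * n + 1) + 1 := by ring
      rw [h2n1]
      have heven_plus : ∀ z, (PsiAux τ (2 * n + 1)).1 (z * q) = 0 := by
        intro z
        show convProd LinearMap.id (PsiAux τ (2 * n)).2 (z * q) = 0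
        exact step_even_plus q hq _ ih.1 z
      have heven_minus : ∀ z, (PsiAux τ (2 * n + 1)).2 (q * z) = 0 := by
        intro z
        show convProd τ (PsiAux τ (2 * n)).1 (q * z) = 0
        exact step_even_minus τ halgmul q hq hqneg _ ih.2 z
      constructor
      · intro z
        show convProd τ (PsiAux τ (2 * n + 1)).1 (z * q) =
          -(q * convProd τ (PsiAux τ (2 * n + 1)).1 z)
        exact step_odd_minus τ halgmul q hq hqneg _ heven_plus z
      · intro z
        show convProd LinearMap.id (PsiAux τ (2 * n + 1)).2 (q * z) =
          q * convProd LinearMap.id (PsiAux τ (2 * n + 1)).2 z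
        exact step_odd_plus q hq _ heven_minus z

lemma psi_even (τ : H →ₗ[R] H) (halgmul : ∀ x y : H, τ (x * y) = τ y * τ x)
    (q : H) (hq : IsPrimitive R q) (hqneg : τ q = -q) (m : ℕ) :
    (∀ z, (PsiAux τ (2 * m + 1)).1 (z * q) = 0) ∧
      (∀ z, (PsiAux τ (2 * m + 1)).2 (q * z) = 0) := by
  obtain ⟨h1, h2⟩ := psi_odd τ halgmul q hq hqneg m
  constructor
  · intro z
    show convProd LinearMap.id (PsiAux τ (2 * m)).2 (z * q) = 0
    exact step_even_plus q hq _ h1 z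
  · intro z
    show convProd τ (PsiAux τ (2 * m)).1 (q * z) = 0
    exact step_even_minus τ halgmul q hq hqneg _ h2 z

end Helpers

/-- `τ` a linear involution on a bialgebra `H`, an algebra antimorphism and
coalgebra (anti)morphism; `p_1,…,p_k` `τ`-invariant primitives, `p̄_1,…,p̄_k̄` `τ`-negating
primitives with `k̄ ≥ 1`, `P` the symmetrised product of the `p_i`. Then for every even
`a ≥ 2`: `Ψ_a^+(P·p̄_1⋯p̄_k̄) = 0` and `Ψ_a^−(p̄_1⋯p̄_k̄·P) = 0`. -/
theorem flip_riffle_even_kernel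
    {R H : Type*} [CommRing R] [Ring H] [Bialgebra R H]
    (τ : H →ₗ[R] H)
    (hinv : ∀ x, τ (τ x) = x)
    (halg1 : τ 1 = 1) (halgmul : ∀ x y : H, τ (x * y) = τ y * τ x)
    (hco : IsCoalgMorph τ ∨ IsCoalgAntimorph τ)
    (k : ℕ) (p : Fin k → H) (hp : ∀ i, IsPrimitive R (p i)) (hpfix : ∀ i, τ (p i) = p i)
    (kb : ℕ) (hkb : 1 ≤ kb)
    (pbar : Fin kb → H) (hpbar : ∀ j, IsPrimitive R (pbar j))
    (hpbarneg : ∀ j, τ (pbar j) = -(pbar j))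
    (a : ℕ) (ha : 2 ≤ a) (haeven : Even a) :
    PsiPlus τ a
        ((∑ σ : Equiv.Perm (Fin k), (List.ofFn fun i => p (σ i)).prod) *
          (List.ofFn pbar).prod) = 0 ∧
    PsiMinus τ a
        ((List.ofFn pbar).prod *
          (∑ σ : Equiv.Perm (Fin k), (List.ofFn fun i => p (σ i)).prod)) = 0 := by
  obtain ⟨m, hm⟩ : ∃ m, a = 2 * m + 2 := by
    obtain ⟨t, ht⟩ := haeven
    exact ⟨t - 1, by omega⟩
  subst hm
  have hidx : 2 * m + 2 - 1 = 2 * m + 1 := by omega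
  obtain ⟨n, rfl⟩ : ∃ n, kb = n + 1 := ⟨kb - 1, by omega⟩
  constructor
  · have hdecomp : (List.ofFn pbar).prod =
        (List.ofFn fun i : Fin n => pbar i.castSucc).prod * pbar (Fin.last n) := by
      rw [List.ofFn_succ', List.prod_concat]
    rw [PsiPlus, hidx, hdecomp, ← mul_assoc]
    exact (psi_even τ halgmul (pbar (Fin.last n)) (hpbar _) (hpbarneg _) m).1 _
  · have hdecomp : (List.ofFn pbar).prod =
        pbar 0 * (List.ofFn fun i : Fin n => pbar i.succ).prod := by
      rw [List.ofFn_succ, List.prod_cons]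
    rw [PsiMinus, hidx, hdecomp, mul_assoc]
    exact (psi_even τ halgmul (pbar 0) (hpbar _) (hpbarneg _) m).2 _
end
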